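/- Let Φ be a Young function and φ ∈ G^dec (φ almost decreasing, φ(r)rⁿ almost increasing). Then there exists C ≥ 1 such that for every ball B = B(a,r) ⊂ ℝⁿ: 1/Φ⁻¹(φ(r)) ≤ ‖χ_B‖_{wL^{(Φ,φ)}} ≤ ‖χ_B‖_{L^{(Φ,φ)}} ≤ C/Φ⁻¹(φ(r)). -/

import Mathlib

open MeasureTheory ENNReal NNReal Metric Set Filter Topology

noncomputable def geninv (Φ : ℝ≥0∞ → ℝ≥0∞) (u : ℝ≥0∞) : ℝ≥0∞ :=
  sInf {t : ℝ≥0∞ | u < Φ t}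

/-- Generalized Young function (class Φ_Y of the paper): increasing, vanishing at 0,
infinite at ∞, convex, left continuous, nondegenerate. -/
def IsYoung (Φ : ℝ≥0∞ → ℝ≥0∞) : Prop :=
  Monotone Φ ∧ Φ 0 = 0 ∧ Φ ⊤ = ⊤ ∧
    (∀ x y a b : ℝ≥0∞, a + b = 1 → Φ (a * x + b * y) ≤ a * Φ x + b * Φ y) ∧
    (∀ t : ℝ≥0∞, 0 < t → ContinuousWithinAt Φ (Set.Iio t) t) ∧
    (∃ t : ℝ≥0∞, 0 < t ∧ Φ t < ⊤) ∧ (∃ t : ℝ≥0∞, t ≠ ⊤ ∧ 0 < Φ t)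

/-- The class `G^dec`: positive, almost decreasing, and `r ↦ φ(r) rⁿ` almost increasing. -/
def Gdec (n : ℕ) (φ : ℝ → ℝ≥0∞) : Prop :=
  (∀ r : ℝ, 0 < r → 0 < φ r ∧ φ r < ⊤) ∧
    ∃ C : ℝ≥0∞, 0 < C ∧ C ≠ ⊤ ∧ ∀ r s : ℝ, 0 < r → r < s →
      φ s ≤ C * φ r ∧ φ r * ENNReal.ofReal r ^ n ≤ C * (φ s * ENNReal.ofReal s ^ n)

/-- Orlicz–Morrey functional on a single ball `B(a,r)`. -/
noncomputable def ballNorm (Φ : ℝ≥0∞ → ℝ≥0∞) (φ : ℝ → ℝ≥0∞) {d : ℕ}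
    (a : EuclideanSpace ℝ (Fin d)) (r : ℝ) (f : EuclideanSpace ℝ (Fin d) → ℝ≥0∞) : ℝ≥0∞ :=
  sInf {l : ℝ≥0∞ | 0 < l ∧
    (∫⁻ x in ball a r, Φ (f x / l)) ≤ φ r * volume (ball a r)}

/-- Weak Orlicz–Morrey functional on a single ball `B(a,r)`. -/
noncomputable def wBallNorm (Φ : ℝ≥0∞ → ℝ≥0∞) (φ : ℝ → ℝ≥0∞) {d : ℕ}
    (a : EuclideanSpace ℝ (Fin d)) (r : ℝ) (f : EuclideanSpace ℝ (Fin d) → ℝ≥0∞) : ℝ≥0∞ :=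
  sInf {l : ℝ≥0∞ | 0 < l ∧ ∀ t : ℝ≥0∞, 0 < t → t ≠ ⊤ →
    Φ t * volume {x ∈ ball a r | t < f x / l} ≤ φ r * volume (ball a r)}

/-- Orlicz–Morrey norm. -/
noncomputable def omNorm (Φ : ℝ≥0∞ → ℝ≥0∞) (φ : ℝ → ℝ≥0∞) {d : ℕ}
    (f : EuclideanSpace ℝ (Fin d) → ℝ≥0∞) : ℝ≥0∞ :=
  ⨆ (a : EuclideanSpace ℝ (Fin d)) (r : ℝ) (_ : 0 < r), ballNorm Φ φ a r f

/-- Weak Orlicz–Morrey norm. -/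
noncomputable def womNorm (Φ : ℝ≥0∞ → ℝ≥0∞) (φ : ℝ → ℝ≥0∞) {d : ℕ}
    (f : EuclideanSpace ℝ (Fin d) → ℝ≥0∞) : ℝ≥0∞ :=
  ⨆ (a : EuclideanSpace ℝ (Fin d)) (r : ℝ) (_ : 0 < r), wBallNorm Φ φ a r f

/-! ### Auxiliary lemmas -/

lemma geninv_apply_le {Φ : ℝ≥0∞ → ℝ≥0∞} {u s : ℝ≥0∞} (hs : s < geninv Φ u) : Φ s ≤ u := by
  by_contra h
  have : geninv Φ u ≤ s := sInf_le (show u < Φ s from lt_of_not_ge h)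
  exact absurd this (not_le_of_gt hs)

lemma apply_geninv_le {Φ : ℝ≥0∞ → ℝ≥0∞}
    (hlc : ∀ t : ℝ≥0∞, 0 < t → ContinuousWithinAt Φ (Set.Iio t) t)
    {u : ℝ≥0∞} (hg : 0 < geninv Φ u) : Φ (geninv Φ u) ≤ u := by
  have hcont : Tendsto Φ (𝓝[<] (geninv Φ u)) (𝓝 (Φ (geninv Φ u))) := hlc _ hg
  have hne : (𝓝[<] (geninv Φ u)).NeBot := nhdsWithin_Iio_self_neBot' ⟨0, hg⟩
  exact le_of_tendsto hcont (eventually_nhdsWithin_of_forall fun s hs => geninv_apply_le hs)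

lemma euclidean_vol_ball {d : ℕ} (a : EuclideanSpace ℝ (Fin d)) {r : ℝ} (hr : 0 < r) :
    volume (ball a r)
      = ENNReal.ofReal r ^ d * volume (ball (0 : EuclideanSpace ℝ (Fin d)) 1) := by
  rcases Nat.eq_zero_or_pos d with hd | hd
  · subst hd
    have h1 : ball a r = (univ : Set (EuclideanSpace ℝ (Fin 0))) := by
      ext x
      simp [Subsingleton.elim x a, mem_ball, dist_self, hr]
    have h2 : ball (0 : EuclideanSpace ℝ (Fin 0)) 1 = univ := by
      ext x
      simp [Subsingleton.elim x (0 : EuclideanSpace ℝ (Fin 0)), mem_ball, dist_self]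
    rw [h1, h2, pow_zero, one_mul]
  · have : Nonempty (Fin d) := ⟨⟨0, hd⟩⟩
    rw [EuclideanSpace.volume_ball, EuclideanSpace.volume_ball, ENNReal.ofReal_one, one_pow,
      one_mul, Fintype.card_fin]

lemma indicator_lintegral {d : ℕ} (Φ : ℝ≥0∞ → ℝ≥0∞) (hΦ0 : Φ 0 = 0)
    (a a' : EuclideanSpace ℝ (Fin d)) (r r' : ℝ) (l : ℝ≥0∞) :
    (∫⁻ x in ball a' r', Φ ((ball a r).indicator (fun _ => (1 : ℝ≥0∞)) x / l)) =
      Φ (1 / l) * volume (ball a r ∩ ball a' r') := by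
  have h : (fun x => Φ ((ball a r).indicator (fun _ => (1 : ℝ≥0∞)) x / l)) =
      (ball a r).indicator (fun _ => Φ (1 / l)) := by
    funext x
    by_cases hx : x ∈ ball a r
    · simp [Set.indicator_of_mem hx]
    · simp [Set.indicator_of_notMem hx, ENNReal.zero_div, hΦ0]
  rw [h, lintegral_indicator measurableSet_ball, setLIntegral_const,
    Measure.restrict_apply measurableSet_ball]

lemma wBallNorm_le_ballNorm {d : ℕ} (Φ : ℝ≥0∞ → ℝ≥0∞) (hmono : Monotone Φ) (hΦ0 : Φ 0 = 0)
    (φ : ℝ → ℝ≥0∞) (a a' : EuclideanSpace ℝ (Fin d)) (r r' : ℝ) :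
    wBallNorm Φ φ a' r' ((ball a r).indicator fun _ => (1 : ℝ≥0∞)) ≤
      ballNorm Φ φ a' r' ((ball a r).indicator fun _ => (1 : ℝ≥0∞)) := by
  apply sInf_le_sInf
  rintro l ⟨hl, hint⟩
  refine ⟨hl, fun t ht htt => ?_⟩
  rw [indicator_lintegral Φ hΦ0 a a' r r' l] at hint
  by_cases htl : t < 1 / l
  · have htl' : t < l⁻¹ := by rwa [one_div] at htl
    have hset : {x ∈ ball a' r' | t < (ball a r).indicator (fun _ => (1 : ℝ≥0∞)) x / l}
        = ball a r ∩ ball a' r' := by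
      ext x
      simp only [Set.mem_setOf_eq, Set.mem_inter_iff]
      by_cases hx : x ∈ ball a r
      · simp [Set.indicator_of_mem hx, htl', hx, and_comm]
      · simp [Set.indicator_of_notMem hx, ENNReal.zero_div, hx, ENNReal.not_lt_zero]
    rw [hset]
    calc Φ t * volume (ball a r ∩ ball a' r')
        ≤ Φ (1 / l) * volume (ball a r ∩ ball a' r') := mul_le_mul_left (hmono htl.le) _
      _ ≤ φ r' * volume (ball a' r') := hint
  · have hset : {x ∈ ball a' r' | t < (ball a r).indicator (fun _ => (1 : ℝ≥0∞)) x / l}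
        = (∅ : Set (EuclideanSpace ℝ (Fin d))) := by
      ext x
      simp only [Set.mem_setOf_eq, Set.mem_empty_iff_false, iff_false, not_and]
      intro _
      by_cases hx : x ∈ ball a r
      · simpa [Set.indicator_of_mem hx] using htl
      · simp [Set.indicator_of_notMem hx, ENNReal.zero_div, ENNReal.not_lt_zero]
    rw [hset]
    simp

/-- Two-sided estimates for the (weak) Orlicz–Morrey norms of characteristic
functions of balls. -/
theorem stmt12 {d : ℕ} (Φ : ℝ≥0∞ → ℝ≥0∞) (hΦ : IsYoung Φ)
    (φ : ℝ → ℝ≥0∞) (hφ : Gdec d φ) :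
    ∃ C : ℝ≥0∞, 1 ≤ C ∧ C ≠ ⊤ ∧ ∀ (a : EuclideanSpace ℝ (Fin d)) (r : ℝ), 0 < r →
      (geninv Φ (φ r))⁻¹ ≤ womNorm Φ φ ((ball a r).indicator fun _ => (1 : ℝ≥0∞)) ∧
      womNorm Φ φ ((ball a r).indicator fun _ => (1 : ℝ≥0∞)) ≤
        omNorm Φ φ ((ball a r).indicator fun _ => (1 : ℝ≥0∞)) ∧
      omNorm Φ φ ((ball a r).indicator fun _ => (1 : ℝ≥0∞)) ≤
        C / geninv Φ (φ r) := by
  obtain ⟨hmono, hΦ0, hΦtop, hconv, hlc, -, -⟩ := hΦ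
  obtain ⟨hpos, C₀, hC₀0, hC₀top, hC₀⟩ := hφ
  set C : ℝ≥0∞ := C₀ ⊔ 1 with hCdef
  have hC1 : 1 ≤ C := le_max_right _ _
  have hC0 : C ≠ 0 := (lt_of_lt_of_le zero_lt_one hC1).ne'
  have hCtop : C ≠ ⊤ := by
    have : C < ⊤ := max_lt hC₀top.lt_top one_lt_top
    exact this.ne
  refine ⟨C, hC1, hCtop, fun a r hr => ?_⟩
  set f : EuclideanSpace ℝ (Fin d) → ℝ≥0∞ := (ball a r).indicator fun _ => (1 : ℝ≥0∞) with hf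
  set g : ℝ≥0∞ := geninv Φ (φ r) with hgdef
  have hφr0 : 0 < φ r := (hpos r hr).1
  have hφrtop : φ r ≠ ⊤ := (hpos r hr).2.ne
  refine ⟨?_, ?_, ?_⟩
  · -- lower bound
    have hlow : g⁻¹ ≤ wBallNorm Φ φ a r f := by
      apply le_sInf
      rintro l ⟨hl, hw⟩
      by_contra hcon
      push_neg at hcon
      have h1 : g < l⁻¹ := ENNReal.lt_inv_iff_lt_inv.mp hcon
      obtain ⟨t, ht, htl⟩ := sInf_lt_iff.mp h1
      simp only [Set.mem_setOf_eq] at ht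
      have ht0 : 0 < t := by
        rcases eq_zero_or_pos t with h0 | h
        · rw [h0, hΦ0] at ht
          exact absurd ht ENNReal.not_lt_zero
        · exact h
      have htne : t ≠ ⊤ := htl.ne_top
      have hwt := hw t ht0 htne
      have hset : {x ∈ ball a r | t < f x / l} = ball a r := by
        ext x
        simp only [Set.mem_setOf_eq]
        constructor
        · exact fun h => h.1
        · intro hx
          refine ⟨hx, ?_⟩
          rw [hf]
          simp only [Set.indicator_of_mem hx]
          rwa [one_div]
      rw [hset] at hwt
      have hV0 : volume (ball a r) ≠ 0 := (measure_ball_pos volume a hr).ne'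
      have hVtop : volume (ball a r) ≠ ⊤ := measure_ball_lt_top.ne
      have hΦt : Φ t ≤ φ r := (ENNReal.mul_le_mul_iff_left hV0 hVtop).mp hwt
      exact absurd hΦt (not_le_of_gt ht)
    calc g⁻¹ ≤ wBallNorm Φ φ a r f := hlow
      _ ≤ womNorm Φ φ f := le_iSup_of_le a (le_iSup_of_le r (le_iSup_of_le hr le_rfl))
  · -- weak ≤ strong
    exact iSup_mono fun a' => iSup_mono fun r' => iSup_mono fun _ =>
      wBallNorm_le_ballNorm Φ hmono hΦ0 φ a a' r r'
  · -- upper bound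
    rcases eq_or_lt_of_le (zero_le : (0 : ℝ≥0∞) ≤ g) with hg0 | hg
    · rw [← hg0, ENNReal.div_zero hC0]
      exact le_top
    · have hgtop : g ≠ ⊤ := by
        intro htopg
        have h1 : Φ g ≤ φ r := apply_geninv_le hlc hg
        rw [htopg, hΦtop] at h1
        exact hφrtop (top_le_iff.mp h1)
      have hΦg : Φ g ≤ φ r := apply_geninv_le hlc hg
      -- the candidate lambda
      set l₀ : ℝ≥0∞ := C / g with hl₀def
      have hl₀pos : 0 < l₀ := ENNReal.div_pos hC0 hgtop
      have hinv : 1 / l₀ = C⁻¹ * g := by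
        rw [one_div, hl₀def, ENNReal.inv_div (Or.inl hgtop) (Or.inl hg.ne')          , ENNReal.div_eq_inv_mul]
      have hΦconv : Φ (C⁻¹ * g) ≤ C⁻¹ * φ r := by
        have hab : C⁻¹ + (1 - C⁻¹) = 1 :=
          add_tsub_cancel_of_le (ENNReal.inv_le_one.mpr hC1)
        have h2 := hconv g 0 C⁻¹ (1 - C⁻¹) hab
        simp only [mul_zero, add_zero, hΦ0] at h2
        calc Φ (C⁻¹ * g) ≤ C⁻¹ * Φ g := h2
          _ ≤ C⁻¹ * φ r := mul_le_mul_right hΦg _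
      apply iSup_le; intro a'
      apply iSup_le; intro r'
      apply iSup_le; intro hr'
      apply sInf_le
      refine ⟨hl₀pos, ?_⟩
      rw [indicator_lintegral Φ hΦ0 a a' r r' l₀, hinv]
      -- key geometric estimate
      have key : φ r * volume (ball a r ∩ ball a' r') ≤ C * (φ r' * volume (ball a' r')) := by
        rcases lt_trichotomy r r' with h | h | h
        · have h1 : φ r * volume (ball a r ∩ ball a' r') ≤ φ r * volume (ball a r) :=
            mul_le_mul_right (measure_mono Set.inter_subset_left) _
          have h2 : φ r * volume (ball a r) ≤ C₀ * (φ r' * volume (ball a' r')) := by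
            rw [euclidean_vol_ball a hr, euclidean_vol_ball a' hr', ← mul_assoc, ← mul_assoc,
              ← mul_assoc]
            exact mul_le_mul_left (by rw [mul_assoc]; exact (hC₀ r r' hr h).2) _
          calc φ r * volume (ball a r ∩ ball a' r')
              ≤ C₀ * (φ r' * volume (ball a' r')) := le_trans h1 h2
            _ ≤ C * (φ r' * volume (ball a' r')) := mul_le_mul_left (le_max_left _ _) _
        · subst h
          calc φ r * volume (ball a r ∩ ball a' r)
              ≤ φ r * volume (ball a' r) := mul_le_mul_right (measure_mono Set.inter_subset_right) _
            _ ≤ C * (φ r * volume (ball a' r)) := le_mul_of_one_le_left zero_le hC1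
        · have h1 : φ r ≤ C₀ * φ r' := (hC₀ r' r hr' h).1
          calc φ r * volume (ball a r ∩ ball a' r')
              ≤ φ r * volume (ball a' r') :=
                mul_le_mul_right (measure_mono Set.inter_subset_right) _
            _ ≤ (C₀ * φ r') * volume (ball a' r') := mul_le_mul_left h1 _
            _ = C₀ * (φ r' * volume (ball a' r')) := mul_assoc _ _ _
            _ ≤ C * (φ r' * volume (ball a' r')) := mul_le_mul_left (le_max_left _ _) _
      calc Φ (C⁻¹ * g) * volume (ball a r ∩ ball a' r')
          ≤ (C⁻¹ * φ r) * volume (ball a r ∩ ball a' r') := mul_le_mul_left hΦconv _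
        _ = C⁻¹ * (φ r * volume (ball a r ∩ ball a' r')) := mul_assoc _ _ _
        _ ≤ C⁻¹ * (C * (φ r' * volume (ball a' r'))) := mul_le_mul_right key _
        _ = (C⁻¹ * C) * (φ r' * volume (ball a' r')) := (mul_assoc _ _ _).symm
        _ = φ r' * volume (ball a' r') := by rw [ENNReal.inv_mul_cancel hC0 hCtop, one_mul]
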